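/- Let f be an increasing convex function on an interval J, A₁, …, A_ℓ be Hermitian n×n matrices with spectra in J, and p₁, …, p_ℓ ∈ [0,1] with ∑_i p_i = 1. Then for each 1 ≤ j ≤ n, λ_j(f(∑_i p_i A_i)) ≤ λ_j(∑_i p_i f(A_i)). -/

import Mathlib

open Matrix ComplexOrder

noncomputable def matFun {n : ℕ} (f : ℝ → ℝ) (A : Matrix (Fin n) (Fin n) ℂ) :
    Matrix (Fin n) (Fin n) ℂ :=
  if hA : A.IsHermitian then
    (hA.eigenvectorUnitary : Matrix (Fin n) (Fin n) ℂ) *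
      Matrix.diagonal (fun i => (f (hA.eigenvalues i) : ℂ)) *
      (hA.eigenvectorUnitary : Matrix (Fin n) (Fin n) ℂ)ᴴ
  else 0

/-- `lam A j` : the `j`-th largest eigenvalue (0-indexed) of a Hermitian matrix `A`. -/
noncomputable def lam {n : ℕ} (A : Matrix (Fin n) (Fin n) ℂ) (j : ℕ) : ℝ :=
  if hA : A.IsHermitian then
    if h : j < n then (hA.eigenvalues ∘ Tuple.sort hA.eigenvalues) ((⟨j, h⟩ : Fin n).rev)
    else 0
  else 0

/-- Loewner order. -/
def loewnerLE {n : ℕ} (A B : Matrix (Fin n) (Fin n) ℂ) : Prop := (B - A).PosSemidef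

/-- `|B| = (B^* B)^{1/2}`. -/
noncomputable def matAbs {n : ℕ} (B : Matrix (Fin n) (Fin n) ℂ) : Matrix (Fin n) (Fin n) ℂ :=
  ((Matrix.posSemidef_conjTranspose_mul_self B).1.eigenvectorUnitary : Matrix (Fin n) (Fin n) ℂ) *
    Matrix.diagonal ((↑) ∘ (√·) ∘ (Matrix.posSemidef_conjTranspose_mul_self B).1.eigenvalues) *
    (star (Matrix.posSemidef_conjTranspose_mul_self B).1.eigenvectorUnitary : Matrix (Fin n) (Fin n) ℂ)

/-- `|B|^r` via functional calculus. -/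
noncomputable def matAbsPow {n : ℕ} (B : Matrix (Fin n) (Fin n) ℂ) (r : ℝ) :
    Matrix (Fin n) (Fin n) ℂ :=
  matFun (fun t => t ^ r) (matAbs B)

namespace AS

open Polynomial

variable {n : ℕ} {B M P : Matrix (Fin n) (Fin n) ℂ}

noncomputable def nsq (x : Fin n → ℂ) : ℝ := ∑ k, Complex.normSq (x k)

lemma dot_self_eq_nsq (x : Fin n → ℂ) : star x ⬝ᵥ x = (nsq x : ℂ) := by
  simp only [dotProduct, nsq, Pi.star_apply, RCLike.star_def, ← Complex.normSq_eq_conj_mul_self]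
  push_cast
  rfl

lemma star_dot_mulVec (U : Matrix (Fin n) (Fin n) ℂ) (x : Fin n → ℂ) (z : Fin n → ℂ) :
    star x ⬝ᵥ (U *ᵥ z) = star (Uᴴ *ᵥ x) ⬝ᵥ z := by
  rw [star_mulVec, conjTranspose_conjTranspose, dotProduct_mulVec]

lemma quad_diag (U : Matrix (Fin n) (Fin n) ℂ) (d : Fin n → ℝ) (x : Fin n → ℂ) :
    star x ⬝ᵥ ((U * diagonal (fun k => (d k : ℂ)) * Uᴴ) *ᵥ x)
      = ((∑ k, d k * Complex.normSq ((Uᴴ *ᵥ x) k) : ℝ) : ℂ) := by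
  have h1 : (U * diagonal (fun k => (d k : ℂ)) * Uᴴ) *ᵥ x
      = U *ᵥ (diagonal (fun k => (d k : ℂ)) *ᵥ (Uᴴ *ᵥ x)) := by
    simp [mulVec_mulVec, Matrix.mul_assoc]
  rw [h1, star_dot_mulVec]
  set y := Uᴴ *ᵥ x with hy
  have h2 : ∀ k, (diagonal (fun k => (d k : ℂ)) *ᵥ y) k = (d k : ℂ) * y k := by
    intro k
    simp [mulVec, diagonal, dotProduct]
  push_cast
  rw [dotProduct]
  refine Finset.sum_congr rfl fun k _ => ?_
  rw [h2 k]
  simp only [Pi.star_apply, RCLike.star_def]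
  rw [show (starRingEnd ℂ) (y k) * ((d k : ℂ) * y k)
      = (d k : ℂ) * ((starRingEnd ℂ) (y k) * y k) by ring,
    ← Complex.normSq_eq_conj_mul_self]

lemma nsq_mulVec (U : Matrix (Fin n) (Fin n) ℂ) (hU : Uᴴ * U = 1) (y : Fin n → ℂ) :
    nsq (U *ᵥ y) = nsq y := by
  have h : star (U *ᵥ y) ⬝ᵥ (U *ᵥ y) = star y ⬝ᵥ y := by
    rw [star_dot_mulVec, mulVec_mulVec, hU, one_mulVec]
  rw [dot_self_eq_nsq, dot_self_eq_nsq] at h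
  exact_mod_cast h

lemma U_star_mul (hB : B.IsHermitian) :
    (hB.eigenvectorUnitary : Matrix (Fin n) (Fin n) ℂ)ᴴ * hB.eigenvectorUnitary = 1 := by
  rw [← star_eq_conjTranspose]
  exact Unitary.coe_star_mul_self hB.eigenvectorUnitary

lemma U_mul_star (hB : B.IsHermitian) :
    (hB.eigenvectorUnitary : Matrix (Fin n) (Fin n) ℂ)
      * (hB.eigenvectorUnitary : Matrix (Fin n) (Fin n) ℂ)ᴴ = 1 := by
  rw [← star_eq_conjTranspose]
  exact Unitary.coe_mul_star_self hB.eigenvectorUnitary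

lemma herm_decomp (hB : B.IsHermitian) :
    B = hB.eigenvectorUnitary * diagonal (fun k => (hB.eigenvalues k : ℂ))
        * (hB.eigenvectorUnitary : Matrix (Fin n) (Fin n) ℂ)ᴴ := by
  conv_lhs => rw [hB.spectral_theorem]
  rfl

lemma matFun_eq (f : ℝ → ℝ) (hB : B.IsHermitian) :
    matFun f B = hB.eigenvectorUnitary * diagonal (fun k => (f (hB.eigenvalues k) : ℂ))
        * (hB.eigenvectorUnitary : Matrix (Fin n) (Fin n) ℂ)ᴴ := by
  rw [matFun, dif_pos hB]

lemma matFun_isHermitian (f : ℝ → ℝ) (hB : B.IsHermitian) : (matFun f B).IsHermitian := by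
  rw [matFun_eq f hB]
  apply isHermitian_mul_mul_conjTranspose
  have h : (star fun k => ((f (hB.eigenvalues k) : ℝ) : ℂ)) = fun k => ((f (hB.eigenvalues k) : ℝ) : ℂ) :=
    funext fun k => Complex.conj_ofReal _
  rw [IsHermitian, diagonal_conjTranspose, h]

lemma sorted_multiset_eq {a b : Fin n → ℝ}
    (h : Multiset.map a Finset.univ.val = Multiset.map b Finset.univ.val) :
    a ∘ Tuple.sort a = b ∘ Tuple.sort b := by
  apply List.ofFn_injective
  apply List.Perm.eq_of_sortedLE (Monotone.sortedLE_ofFn (Tuple.monotone_sort a))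
    (Monotone.sortedLE_ofFn (Tuple.monotone_sort b)) ?_
  rw [← Multiset.coe_eq_coe, ← Fin.univ_val_map, ← Fin.univ_val_map]
  calc Multiset.map (a ∘ Tuple.sort a) Finset.univ.val
      = Multiset.map a (Multiset.map (Tuple.sort a) Finset.univ.val) := by
        rw [Multiset.map_map]
    _ = Multiset.map a Finset.univ.val := by rw [Multiset.map_univ_val_equiv]
    _ = Multiset.map b Finset.univ.val := h
    _ = Multiset.map b (Multiset.map (Tuple.sort b) Finset.univ.val) := by
        rw [Multiset.map_univ_val_equiv]
    _ = Multiset.map (b ∘ Tuple.sort b) Finset.univ.val := by rw [Multiset.map_map]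

lemma charpoly_diagonal_roots (d : Fin n → ℂ) :
    (diagonal d).charpoly.roots = Multiset.map d Finset.univ.val := by
  rw [charpoly_of_upperTriangular _ (blockTriangular_diagonal d)]
  have h1 : ∏ i : Fin n, (X - C (diagonal d i i)) = ∏ i : Fin n, (X - C (d i)) :=
    Finset.prod_congr rfl fun i _ => by rw [diagonal_apply_eq]
  rw [h1, Finset.prod_eq_multiset_prod]
  have h2 := roots_multiset_prod_X_sub_C (Multiset.map d Finset.univ.val)
  rw [Multiset.map_map] at h2
  exact h2

lemma charpoly_conj_unitary {U : Matrix (Fin n) (Fin n) ℂ}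
    (h1 : U * Uᴴ = 1) (D : Matrix (Fin n) (Fin n) ℂ) :
    (U * D * Uᴴ).charpoly = D.charpoly := by
  have hdet : (C.mapMatrix U).det * (C.mapMatrix Uᴴ).det = 1 := by
    rw [← det_mul, ← _root_.map_mul, h1, _root_.map_one, det_one]
  have hc : ∀ M : Matrix (Fin n) (Fin n) ℂ[X],
      scalar (Fin n) (X : ℂ[X]) * M = M * scalar (Fin n) (X : ℂ[X]) :=
    fun M => scalar_commute _ (fun r' => Commute.all _ _) M
  have key : charmatrix (U * D * Uᴴ) = C.mapMatrix U * charmatrix D * C.mapMatrix Uᴴ := by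
    rw [charmatrix, charmatrix, Matrix.mul_sub, Matrix.sub_mul]
    congr 1
    · calc scalar (Fin n) (X : ℂ[X])
          = scalar (Fin n) (X : ℂ[X]) * (C.mapMatrix U * C.mapMatrix Uᴴ) := by
            rw [← _root_.map_mul, h1, _root_.map_one, mul_one]
        _ = C.mapMatrix U * scalar (Fin n) (X : ℂ[X]) * C.mapMatrix Uᴴ := by
            rw [← Matrix.mul_assoc, hc]
    · rw [← _root_.map_mul, ← _root_.map_mul]
  rw [Matrix.charpoly, Matrix.charpoly, key, det_mul, det_mul]
  rw [mul_comm (C.mapMatrix U).det D.charmatrix.det, mul_assoc, hdet, mul_one]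

lemma eigs_multiset (hP : P.IsHermitian) {U : Matrix (Fin n) (Fin n) ℂ}
    (h1 : U * Uᴴ = 1) (d : Fin n → ℝ)
    (hPU : P = U * diagonal (fun k => (d k : ℂ)) * Uᴴ) :
    Multiset.map hP.eigenvalues Finset.univ.val = Multiset.map d Finset.univ.val := by
  have e1 : P.charpoly = (diagonal (fun k => (d k : ℂ))).charpoly := by
    conv_lhs => rw [hPU]
    exact charpoly_conj_unitary h1 _
  have e2 : P.charpoly = (diagonal (fun k => (hP.eigenvalues k : ℂ))).charpoly := by
    conv_lhs => rw [herm_decomp hP]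
    exact charpoly_conj_unitary (U_mul_star hP) _
  have h3 := congrArg Polynomial.roots (e2.symm.trans e1)
  rw [charpoly_diagonal_roots, charpoly_diagonal_roots] at h3
  refine Multiset.map_injective Complex.ofReal_injective ?_
  simpa [Multiset.map_map, Function.comp_def] using h3

lemma lam_eq (hB : B.IsHermitian) {j : ℕ} (hj : j < n) :
    lam B j = hB.eigenvalues (Tuple.sort hB.eigenvalues ((⟨j, hj⟩ : Fin n).rev)) := by
  rw [lam, dif_pos hB, dif_pos hj]
  rfl

lemma lam_matFun (hM : M.IsHermitian) (J : Set ℝ) (f : ℝ → ℝ) (hmono : MonotoneOn f J)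
    (hspec : ∀ k, hM.eigenvalues k ∈ J) {j : ℕ} (hj : j < n) :
    lam (matFun f M) j = f (lam M j) := by
  have hP := matFun_isHermitian f hM
  have hmul : Multiset.map hP.eigenvalues Finset.univ.val
      = Multiset.map (fun k => f (hM.eigenvalues k)) Finset.univ.val :=
    eigs_multiset hP (U_mul_star hM) _ (matFun_eq f hM)
  have hsort := sorted_multiset_eq hmul
  have hmono2 : Monotone ((fun k => f (hM.eigenvalues k)) ∘ Tuple.sort hM.eigenvalues) := by
    intro i i' hii
    exact hmono (hspec _) (hspec _) (Tuple.monotone_sort hM.eigenvalues hii)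
  have h4 : (fun k => f (hM.eigenvalues k)) ∘ (Tuple.sort hM.eigenvalues)
      = (fun k => f (hM.eigenvalues k)) ∘ Tuple.sort (fun k => f (hM.eigenvalues k)) :=
    (Tuple.comp_sort_eq_comp_iff_monotone).mpr hmono2
  rw [lam_eq hP hj, lam_eq hM hj]
  exact congrFun (hsort.trans h4.symm) ((⟨j, hj⟩ : Fin n).rev)

noncomputable def coordSub (K : Finset (Fin n)) : Submodule ℂ (Fin n → ℂ) where
  carrier := {y | ∀ k, k ∉ K → y k = 0}
  add_mem' := fun {a b} ha hb k hk => by simp [ha k hk, hb k hk]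
  zero_mem' := fun k _ => rfl
  smul_mem' := fun c y hy k hk => by simp [hy k hk]

noncomputable def coordEquiv (K : Finset (Fin n)) : coordSub K ≃ₗ[ℂ] (↥K → ℂ) where
  toFun y := fun k => y.1 k
  map_add' := fun a b => rfl
  map_smul' := fun c a => rfl
  invFun z := ⟨fun k => if h : k ∈ K then z ⟨k, h⟩ else 0, fun k hk => dif_neg hk⟩
  left_inv := fun y => by
    ext k
    by_cases h : k ∈ K
    · simp [h]
    · simp [h, y.2 k h]
  right_inv := fun z => by
    ext k
    simp [k.2]

lemma finrank_coordSub (K : Finset (Fin n)) :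
    Module.finrank ℂ (coordSub K) = K.card := by
  rw [(coordEquiv K).finrank_eq]
  simp [Module.finrank_pi]

noncomputable def espace (U : Matrix (Fin n) (Fin n) ℂ) (K : Finset (Fin n)) :
    Submodule ℂ (Fin n → ℂ) :=
  (coordSub K).map (Matrix.mulVecLin U)

lemma mulVec_injective_of_unitary {U : Matrix (Fin n) (Fin n) ℂ} (hU : Uᴴ * U = 1) :
    Function.Injective (Matrix.mulVecLin U) := by
  intro a b hab
  have h : Uᴴ *ᵥ (U *ᵥ a) = Uᴴ *ᵥ (U *ᵥ b) := by
    simpa [Matrix.mulVecLin] using congrArg (fun v => Uᴴ *ᵥ v) hab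
  simpa [mulVec_mulVec, hU] using h

lemma finrank_espace {U : Matrix (Fin n) (Fin n) ℂ} (hU : Uᴴ * U = 1) (K : Finset (Fin n)) :
    Module.finrank ℂ (espace U K) = K.card := by
  rw [espace, ← ((coordSub K).equivMapOfInjective _ (mulVec_injective_of_unitary hU)).finrank_eq]
  exact finrank_coordSub K

lemma exists_mem_inf (S T : Submodule ℂ (Fin n → ℂ))
    (hdim : n < Module.finrank ℂ S + Module.finrank ℂ T) :
    ∃ x : Fin n → ℂ, x ≠ 0 ∧ x ∈ S ∧ x ∈ T := by
  have htop : Module.finrank ℂ (Fin n → ℂ) = n := by simp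
  have hsup := Submodule.finrank_le (S ⊔ T)
  rw [htop] at hsup
  have h := Submodule.finrank_sup_add_finrank_inf_eq S T
  have hpos : 0 < Module.finrank ℂ ↥(S ⊓ T) := by omega
  have : Nontrivial ↥(S ⊓ T) := Module.nontrivial_of_finrank_pos hpos
  obtain ⟨v, hv⟩ := exists_ne (0 : ↥(S ⊓ T))
  exact ⟨v.1, by simpa [Submodule.coe_eq_zero] using hv,
    (Submodule.mem_inf.mp v.2).1, (Submodule.mem_inf.mp v.2).2⟩

lemma exists_unit (S T : Submodule ℂ (Fin n → ℂ))
    (hdim : n < Module.finrank ℂ S + Module.finrank ℂ T) :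
    ∃ x : Fin n → ℂ, nsq x = 1 ∧ x ∈ S ∧ x ∈ T := by
  obtain ⟨x, hx0, hS, hT⟩ := exists_mem_inf S T hdim
  have h0 : 0 ≤ nsq x := Finset.sum_nonneg fun k _ => Complex.normSq_nonneg _
  have hpos : 0 < nsq x := by
    rcases h0.lt_or_eq with h | h
    · exact h
    · exfalso
      apply hx0
      funext k
      have hz := (Finset.sum_eq_zero_iff_of_nonneg
        (fun k _ => Complex.normSq_nonneg (x k))).mp h.symm
      exact Complex.normSq_eq_zero.mp (hz k (Finset.mem_univ k))
  set s := nsq x with hs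
  refine ⟨(((Real.sqrt s)⁻¹ : ℝ) : ℂ) • x, ?_, S.smul_mem _ hS, T.smul_mem _ hT⟩
  have hc : nsq ((((Real.sqrt s)⁻¹ : ℝ) : ℂ) • x)
      = ((Real.sqrt s)⁻¹ * (Real.sqrt s)⁻¹) * s := by
    rw [nsq, hs, nsq, Finset.mul_sum]
    refine Finset.sum_congr rfl fun k _ => ?_
    rw [Pi.smul_apply, smul_eq_mul, Complex.normSq_mul, Complex.normSq_ofReal]
  rw [hc, ← mul_inv, Real.mul_self_sqrt hpos.le]
  exact inv_mul_cancel₀ hpos.ne'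

/-- real quadratic form value of a Hermitian matrix. -/
noncomputable def rq (hB : B.IsHermitian) (x : Fin n → ℂ) : ℝ :=
  ∑ k, hB.eigenvalues k
    * Complex.normSq (((hB.eigenvectorUnitary : Matrix (Fin n) (Fin n) ℂ)ᴴ *ᵥ x) k)

lemma quad_herm (hB : B.IsHermitian) (x : Fin n → ℂ) :
    star x ⬝ᵥ (B *ᵥ x) = (rq hB x : ℂ) := by
  conv_lhs => rw [herm_decomp hB]
  exact quad_diag _ _ x

lemma quad_matFun (f : ℝ → ℝ) (hB : B.IsHermitian) (x : Fin n → ℂ) :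
    star x ⬝ᵥ (matFun f B *ᵥ x)
      = ((∑ k, f (hB.eigenvalues k)
          * Complex.normSq (((hB.eigenvectorUnitary : Matrix (Fin n) (Fin n) ℂ)ᴴ *ᵥ x) k) : ℝ) : ℂ) := by
  conv_lhs => rw [matFun_eq f hB]
  exact quad_diag _ _ x

lemma jensen_quad {J : Set ℝ} {f : ℝ → ℝ} (hf : ConvexOn ℝ J f) (hB : B.IsHermitian)
    (hspec : ∀ k, hB.eigenvalues k ∈ J) {x : Fin n → ℂ} (hx : nsq x = 1) :
    ∃ a b : ℝ, a ∈ J ∧ star x ⬝ᵥ (B *ᵥ x) = (a : ℂ) ∧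
      star x ⬝ᵥ (matFun f B *ᵥ x) = (b : ℂ) ∧ f a ≤ b := by
  set U : Matrix (Fin n) (Fin n) ℂ := (hB.eigenvectorUnitary : Matrix (Fin n) (Fin n) ℂ) with hU
  set t : Fin n → ℝ := fun k => Complex.normSq ((Uᴴ *ᵥ x) k) with ht
  have ht0 : ∀ k ∈ Finset.univ (α := Fin n), 0 ≤ t k := fun k _ => Complex.normSq_nonneg _
  have ht1 : ∑ k, t k = 1 := by
    have hnn : nsq (Uᴴ *ᵥ x) = nsq x := by
      refine nsq_mulVec Uᴴ ?_ x
      rw [conjTranspose_conjTranspose]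
      exact U_mul_star hB
    rw [nsq] at hnn
    rw [ht, hnn, hx]
  refine ⟨∑ k, t k • hB.eigenvalues k, ∑ k, t k • f (hB.eigenvalues k),
    hf.1.sum_mem ht0 ht1 (fun k _ => hspec k), ?_, ?_, ?_⟩
  · rw [quad_herm hB x]
    norm_cast
    exact Finset.sum_congr rfl fun k _ => by rw [smul_eq_mul, mul_comm]
  · rw [quad_matFun f hB x]
    norm_cast
    exact Finset.sum_congr rfl fun k _ => by rw [smul_eq_mul, mul_comm]
  · exact hf.map_sum_le ht0 ht1 (fun k _ => hspec k)

lemma quad_sum {ℓ : ℕ} (c : Fin ℓ → ℝ) (A : Fin ℓ → Matrix (Fin n) (Fin n) ℂ) (x : Fin n → ℂ) :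
    star x ⬝ᵥ ((∑ i, (c i : ℂ) • A i) *ᵥ x) = ∑ i, (c i : ℂ) * (star x ⬝ᵥ (A i *ᵥ x)) := by
  have h : (∑ i, (c i : ℂ) • A i) *ᵥ x = ∑ i, (c i : ℂ) • (A i *ᵥ x) := by
    ext k
    simp only [mulVec, dotProduct, Finset.sum_apply, Matrix.sum_apply, Pi.smul_apply,
      Matrix.smul_apply, smul_eq_mul, Finset.sum_mul, mul_assoc]
    rw [Finset.sum_comm]
    simp [Finset.mul_sum]
  have hd : ∀ (w : Fin ℓ → Fin n → ℂ), star x ⬝ᵥ (∑ i, w i) = ∑ i, star x ⬝ᵥ (w i) := by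
    intro w
    simp only [dotProduct, Finset.sum_apply, Finset.mul_sum]
    exact Finset.sum_comm
  rw [h, hd]
  exact Finset.sum_congr rfl fun i _ => by rw [dotProduct_smul, smul_eq_mul]

lemma rq_ge (hB : B.IsHermitian) {K : Finset (Fin n)} {c : ℝ}
    (hc : ∀ k ∈ K, c ≤ hB.eigenvalues k) {x : Fin n → ℂ}
    (hx : x ∈ espace (hB.eigenvectorUnitary : Matrix (Fin n) (Fin n) ℂ) K) :
    c * nsq x ≤ rq hB x := by
  obtain ⟨y, hy, rfl⟩ := hx
  set U : Matrix (Fin n) (Fin n) ℂ := (hB.eigenvectorUnitary : Matrix (Fin n) (Fin n) ℂ) with hUdef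
  have hxy : Uᴴ *ᵥ (Matrix.mulVecLin U y) = y := by
    simp [Matrix.mulVecLin_apply, mulVec_mulVec, U_star_mul hB, one_mulVec]
    rw [hUdef, U_star_mul hB, one_mulVec]
  have hnsq : nsq (Matrix.mulVecLin U y) = nsq y := by
    simpa [Matrix.mulVecLin_apply] using nsq_mulVec U (U_star_mul hB) y
  rw [rq, hxy, hnsq, nsq, Finset.mul_sum]
  refine Finset.sum_le_sum fun k _ => ?_
  by_cases hk : k ∈ K
  · exact mul_le_mul_of_nonneg_right (hc k hk) (Complex.normSq_nonneg _)
  · rw [hy k hk]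
    simp

lemma rq_le (hB : B.IsHermitian) {K : Finset (Fin n)} {c : ℝ}
    (hc : ∀ k ∈ K, hB.eigenvalues k ≤ c) {x : Fin n → ℂ}
    (hx : x ∈ espace (hB.eigenvectorUnitary : Matrix (Fin n) (Fin n) ℂ) K) :
    rq hB x ≤ c * nsq x := by
  obtain ⟨y, hy, rfl⟩ := hx
  set U : Matrix (Fin n) (Fin n) ℂ := (hB.eigenvectorUnitary : Matrix (Fin n) (Fin n) ℂ) with hUdef
  have hxy : Uᴴ *ᵥ (Matrix.mulVecLin U y) = y := by
    simp [Matrix.mulVecLin_apply, mulVec_mulVec, U_star_mul hB, one_mulVec]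
    rw [hUdef, U_star_mul hB, one_mulVec]
  have hnsq : nsq (Matrix.mulVecLin U y) = nsq y := by
    simpa [Matrix.mulVecLin_apply] using nsq_mulVec U (U_star_mul hB) y
  rw [rq, hxy, hnsq, nsq, Finset.mul_sum]
  refine Finset.sum_le_sum fun k _ => ?_
  by_cases hk : k ∈ K
  · exact mul_le_mul_of_nonneg_right (hc k hk) (Complex.normSq_nonneg _)
  · rw [hy k hk]
    simp

end AS

/-- **Aujla–Silva lemma.** If `f` is increasing and convex on an interval `J`
(the convex subsets of `ℝ` are exactly the intervals), `Aᵢ` Hermitian with spectra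
in `J` and `pᵢ ∈ [0,1]`, `∑ pᵢ = 1`, then `λⱼ(f(∑ pᵢAᵢ)) ≤ λⱼ(∑ pᵢ f(Aᵢ))`
for each `j`. -/
theorem eigenvalue_jensen_increasing_convex {n ℓ : ℕ}
    (J : Set ℝ) (f : ℝ → ℝ) (hf : ConvexOn ℝ J f) (hmono : MonotoneOn f J)
    (A : Fin ℓ → Matrix (Fin n) (Fin n) ℂ) (hA : ∀ i, (A i).IsHermitian)
    (hspec : ∀ i, ∀ j, (hA i).eigenvalues j ∈ J)
    (p : Fin ℓ → ℝ) (hp0 : ∀ i, 0 ≤ p i) (hp1 : ∀ i, p i ≤ 1) (hps : ∑ i, p i = 1)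
    (j : ℕ) (hj : j < n) :
    lam (matFun f (∑ i, (p i : ℂ) • A i)) j ≤ lam (∑ i, (p i : ℂ) • matFun f (A i)) j := by
  classical
  have hM : (∑ i, (p i : ℂ) • A i).IsHermitian := by
    rw [Matrix.IsHermitian, conjTranspose_sum]
    refine Finset.sum_congr rfl fun i _ => ?_
    rw [conjTranspose_smul, (hA i).eq, RCLike.star_def, Complex.conj_ofReal]
  have hN : (∑ i, (p i : ℂ) • matFun f (A i)).IsHermitian := by
    rw [Matrix.IsHermitian, conjTranspose_sum]
    refine Finset.sum_congr rfl fun i _ => ?_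
    rw [conjTranspose_smul, (AS.matFun_isHermitian f (hA i)).eq, RCLike.star_def,
      Complex.conj_ofReal]
  -- eigenvalues of M lie in J
  have eigM_mem : ∀ k, hM.eigenvalues k ∈ J := by
    intro k
    set v : Fin n → ℂ := ⇑(hM.eigenvectorBasis k) with hv
    have hv1 : AS.nsq v = 1 := by
      have hnorm : ‖hM.eigenvectorBasis k‖ = 1 := hM.eigenvectorBasis.orthonormal.1 k
      have hsq : ‖hM.eigenvectorBasis k‖ ^ 2 = 1 := by rw [hnorm]; norm_num
      rw [EuclideanSpace.norm_eq,
        Real.sq_sqrt (Finset.sum_nonneg fun i _ => sq_nonneg _)] at hsq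
      rw [AS.nsq, ← hsq]
      refine Finset.sum_congr rfl fun i _ => ?_
      rw [Complex.normSq_eq_norm_sq]
    choose a b haJ hqa hqb hab using fun i => AS.jensen_quad hf (hA i) (hspec i) hv1
    have hq : star v ⬝ᵥ ((∑ i, (p i : ℂ) • A i) *ᵥ v) = ((∑ i, p i * a i : ℝ) : ℂ) := by
      rw [AS.quad_sum]
      push_cast
      exact Finset.sum_congr rfl fun i _ => by rw [hqa i]
    have he := hM.eigenvalues_eq k
    rw [← hv, hq] at he
    rw [he]
    have hmem := hf.1.sum_mem (t := Finset.univ) (fun i _ => hp0 i) hps (fun i _ => haJ i)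
    simpa [smul_eq_mul] using hmem
  -- set up the two spectral subspaces
  set μ := hM.eigenvalues with hμ
  set ν := hN.eigenvalues with hν
  set jf : Fin n := ⟨j, hj⟩ with hjf
  set KM := Finset.image (Tuple.sort μ) (Finset.Ici jf.rev) with hKM
  set KN := Finset.image (Tuple.sort ν) (Finset.Iic jf.rev) with hKN
  have hrev : (jf.rev : ℕ) = n - (j + 1) := Fin.val_rev jf
  have hcM : KM.card = j + 1 := by
    rw [hKM, Finset.card_image_of_injective _ (Tuple.sort μ).injective, Fin.card_Ici, hrev]
    omega
  have hcN : KN.card = n - j := by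
    rw [hKN, Finset.card_image_of_injective _ (Tuple.sort ν).injective, Fin.card_Iic, hrev]
    omega
  obtain ⟨x, hx1, hxS, hxT⟩ := AS.exists_unit
    (AS.espace (hM.eigenvectorUnitary : Matrix (Fin n) (Fin n) ℂ) KM)
    (AS.espace (hN.eigenvectorUnitary : Matrix (Fin n) (Fin n) ℂ) KN)
    (by
      rw [AS.finrank_espace (AS.U_star_mul hM), AS.finrank_espace (AS.U_star_mul hN), hcM, hcN]
      omega)
  choose a b haJ hqa hqb hab using fun i => AS.jensen_quad hf (hA i) (hspec i) hx1
  -- identify the quadratic forms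
  have hqM : AS.rq hM x = ∑ i, p i * a i := by
    have h2 : star x ⬝ᵥ ((∑ i, (p i : ℂ) • A i) *ᵥ x) = ((∑ i, p i * a i : ℝ) : ℂ) := by
      rw [AS.quad_sum]
      push_cast
      exact Finset.sum_congr rfl fun i _ => by rw [hqa i]
    exact_mod_cast (AS.quad_herm hM x).symm.trans h2
  have hqN : AS.rq hN x = ∑ i, p i * b i := by
    have h2 : star x ⬝ᵥ ((∑ i, (p i : ℂ) • matFun f (A i)) *ᵥ x)
        = ((∑ i, p i * b i : ℝ) : ℂ) := by
      rw [AS.quad_sum]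
      push_cast
      exact Finset.sum_congr rfl fun i _ => by rw [hqb i]
    exact_mod_cast (AS.quad_herm hN x).symm.trans h2
  -- min-max bounds
  have hlow : lam (∑ i, (p i : ℂ) • A i) j * AS.nsq x ≤ AS.rq hM x := by
    refine AS.rq_ge hM ?_ hxS
    intro k hk
    obtain ⟨i, hi, rfl⟩ := Finset.mem_image.mp hk
    rw [AS.lam_eq hM hj]
    exact Tuple.monotone_sort μ (Finset.mem_Ici.mp hi)
  have hup : AS.rq hN x ≤ lam (∑ i, (p i : ℂ) • matFun f (A i)) j * AS.nsq x := by
    refine AS.rq_le hN ?_ hxT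
    intro k hk
    obtain ⟨i, hi, rfl⟩ := Finset.mem_image.mp hk
    rw [AS.lam_eq hN hj]
    exact Tuple.monotone_sort ν (Finset.mem_Iic.mp hi)
  rw [hx1, mul_one] at hlow hup
  -- memberships
  have hmemsum : (∑ i, p i * a i) ∈ J := by
    have hmem := hf.1.sum_mem (t := Finset.univ) (fun i _ => hp0 i) hps (fun i _ => haJ i)
    simpa [smul_eq_mul] using hmem
  have hlamM : lam (∑ i, (p i : ℂ) • A i) j ∈ J := by
    rw [AS.lam_eq hM hj]
    exact eigM_mem _
  -- final chain
  rw [AS.lam_matFun hM J f hmono eigM_mem hj]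
  have c1 : f (lam (∑ i, (p i : ℂ) • A i) j) ≤ f (∑ i, p i * a i) :=
    hmono hlamM hmemsum (hqM ▸ hlow)
  have c2 : f (∑ i, p i * a i) ≤ ∑ i, p i * f (a i) := by
    have h := hf.map_sum_le (fun i _ => hp0 i) hps (fun i _ => haJ i)
    simpa [smul_eq_mul] using h
  have c3 : ∑ i, p i * f (a i) ≤ ∑ i, p i * b i :=
    Finset.sum_le_sum fun i _ => mul_le_mul_of_nonneg_left (hab i) (hp0 i)
  have c4 : AS.rq hN x ≤ lam (∑ i, (p i : ℂ) • matFun f (A i)) j := hup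
  linarith [hqN ▸ c4]
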